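/- Let H be a Hermitian operator on a finite-dimensional complex Hilbert space with spectral decomposition H = ∑_{μ∈ι} E_μ P_μ, let S ⊆ ι and P = ∑_{μ∈S} P_μ. If an operator A satisfies A = P A (1−P), then for every β > 0, I_{H,β}(−i[H,A]) − A = −∑_{μ∈S} ∑_{ν∉S} e^{−(E_μ−E_ν)²/(4β²)} P_μ A P_ν. -/

import Mathlib

open MeasureTheory Real

/-- The Heisenberg time evolution `τ^H_s(A) = e^{isH} A e^{-isH}`. -/
noncomputable def heis {V : Type*} [NormedAddCommGroup V] [NormedSpace ℂ V]
    (H : V →L[ℂ] V) (s : ℝ) (A : V →L[ℂ] V) : V →L[ℂ] V :=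
  NormedSpace.exp ((Complex.I * (s : ℂ)) • H) * A *
    NormedSpace.exp ((-(Complex.I * (s : ℂ))) • H)

/-- The Gaussian filter `φ_β(t) = (β/√π) e^{-β²t²}`. -/
noncomputable def phi (β t : ℝ) : ℝ := (β / Real.sqrt π) * Real.exp (-(β ^ 2 * t ^ 2))

/-- The almost inverse Liouvillian `I_{H,β}(A) = ∫ φ_β(t) (∫_0^t τ^H_s(A) ds) dt`. -/
noncomputable def aiL {V : Type*} [NormedAddCommGroup V] [NormedSpace ℂ V]
    (H : V →L[ℂ] V) (β : ℝ) (A : V →L[ℂ] V) : V →L[ℂ] V :=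
  ∫ t : ℝ, phi β t • (∫ s in (0:ℝ)..t, heis H s A)

section Aux

lemma exp_mul_eig {𝔸 : Type*} [NormedRing 𝔸] [NormedAlgebra ℂ 𝔸] [CompleteSpace 𝔸]
    {X Q : 𝔸} {e : ℂ} (h : X * Q = e • Q) :
    NormedSpace.exp X * Q = Complex.exp e • Q := by
  have hn : ∀ n : ℕ, X ^ n * Q = e ^ n • Q := by
    intro n
    induction n with
    | zero => simp
    | succ n ih =>
      rw [pow_succ, mul_assoc, h, mul_smul_comm, ih, smul_smul, pow_succ, mul_comm]
  let L : 𝔸 →L[ℂ] 𝔸 := (ContinuousLinearMap.mul ℂ 𝔸).flip Q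
  have hL : ∀ Y, L Y = Y * Q := fun _ => rfl
  rw [NormedSpace.exp_eq_tsum ℂ, ← hL, L.map_tsum (NormedSpace.expSeries_summable' X)]
  have : ∀ n : ℕ, L ((n.factorial : ℂ)⁻¹ • X ^ n) = ((n.factorial : ℂ)⁻¹ * e ^ n) • Q := by
    intro n
    rw [L.map_smul, hL, hn, smul_smul]
  simp_rw [this]
  rw [Summable.tsum_smul_const]
  · congr 1
    rw [Complex.exp_eq_exp_ℂ, NormedSpace.exp_eq_tsum ℂ]
    simp_rw [smul_eq_mul]
  · have := NormedSpace.expSeries_summable' (𝕂 := ℂ) e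
    simpa [smul_eq_mul] using this

lemma eig_mul_exp {𝔸 : Type*} [NormedRing 𝔸] [NormedAlgebra ℂ 𝔸] [CompleteSpace 𝔸]
    {X Q : 𝔸} {e : ℂ} (h : Q * X = e • Q) :
    Q * NormedSpace.exp X = Complex.exp e • Q := by
  have hn : ∀ n : ℕ, Q * X ^ n = e ^ n • Q := by
    intro n
    induction n with
    | zero => simp
    | succ n ih =>
      rw [pow_succ, ← mul_assoc, ih, smul_mul_assoc, h, smul_smul, pow_succ]
  let L : 𝔸 →L[ℂ] 𝔸 := ContinuousLinearMap.mul ℂ 𝔸 Q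
  have hL : ∀ Y, L Y = Q * Y := fun _ => rfl
  rw [NormedSpace.exp_eq_tsum ℂ, ← hL, L.map_tsum (NormedSpace.expSeries_summable' X)]
  have : ∀ n : ℕ, L ((n.factorial : ℂ)⁻¹ • X ^ n) = ((n.factorial : ℂ)⁻¹ * e ^ n) • Q := by
    intro n
    rw [L.map_smul, hL, hn, smul_smul]
  simp_rw [this]
  rw [Summable.tsum_smul_const]
  · congr 1
    rw [Complex.exp_eq_exp_ℂ, NormedSpace.exp_eq_tsum ℂ]
    simp_rw [smul_eq_mul]
  · have := NormedSpace.expSeries_summable' (𝕂 := ℂ) e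
    simpa [smul_eq_mul] using this

lemma coe_real_smul {M : Type*} [AddCommGroup M] [Module ℂ M] [Module ℝ M]
    [IsScalarTower ℝ ℂ M] (r : ℝ) (m : M) : ((r : ℂ)) • m = r • m := by
  rw [show ((r : ℂ)) = r • (1 : ℂ) by simp [Complex.real_smul], smul_assoc, one_smul]

lemma real_smul_complex_smul {M : Type*} [AddCommGroup M] [Module ℂ M] [Module ℝ M]
    [IsScalarTower ℝ ℂ M] (r : ℝ) (z : ℂ) (m : M) :
    r • (z • m) = ((r : ℂ) * z) • m := by
  rw [← coe_real_smul r (z • m), smul_smul]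

lemma phi_integrable {β : ℝ} (hβ : 0 < β) : Integrable (fun t => phi β t) := by
  unfold phi
  apply Integrable.const_mul
  simp_rw [neg_mul_eq_neg_mul (β ^ 2)]
  exact integrable_exp_neg_mul_sq (by positivity)

lemma phi_integral_one {β : ℝ} (hβ : 0 < β) : ∫ t : ℝ, phi β t = 1 := by
  unfold phi
  rw [integral_const_mul]
  simp_rw [neg_mul_eq_neg_mul (β ^ 2)]
  rw [integral_gaussian, Real.sqrt_div (by positivity : (0:ℝ) ≤ π), Real.sqrt_sq hβ.le]
  have h1 : Real.sqrt π ≠ 0 := by positivity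
  field_simp

lemma phi_eq_cexp {β : ℝ} (ω t : ℝ) :
    (phi β t : ℂ) * Complex.exp (Complex.I * ω * t) =
      ((β / Real.sqrt π : ℝ) : ℂ) *
        (Complex.exp (Complex.I * (ω : ℂ) * t) * Complex.exp (-(β ^ 2 : ℂ) * t ^ 2)) := by
  unfold phi
  push_cast
  rw [neg_mul]
  ring

lemma phi_mul_cexp_integrable {β : ℝ} (hβ : 0 < β) (ω : ℝ) :
    Integrable (fun t : ℝ => (phi β t : ℂ) * Complex.exp (Complex.I * ω * t)) := by
  have h := (integrable_cexp_quadratic (b := ((β ^ 2 : ℝ) : ℂ))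
      (by rw [Complex.ofReal_re]; positivity) (Complex.I * ω) 0).const_mul
      ((β / Real.sqrt π : ℝ) : ℂ)
  apply h.congr
  filter_upwards with t
  rw [phi_eq_cexp]
  rw [add_zero, Complex.exp_add]
  push_cast
  ring

lemma phi_fourier {β : ℝ} (hβ : 0 < β) (ω : ℝ) :
    ∫ t : ℝ, (phi β t : ℂ) * Complex.exp (Complex.I * ω * t) =
      ((Real.exp (-(ω ^ 2 / (4 * β ^ 2))) : ℝ) : ℂ) := by
  simp_rw [phi_eq_cexp ω]
  rw [integral_const_mul]
  have hb : (0:ℝ) < (((β:ℂ) ^ 2)).re := by rw [← Complex.ofReal_pow, Complex.ofReal_re]; positivity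
  rw [fourierIntegral_gaussian hb (ω : ℂ)]
  have hcpow : ((π : ℂ) / (β ^ 2 : ℂ)) ^ (1 / 2 : ℂ) = ((Real.sqrt π / β : ℝ) : ℂ) := by
    have h1 : ((π : ℂ) / (β ^ 2 : ℂ)) = ((π / β ^ 2 : ℝ) : ℂ) := by push_cast; ring
    have h2 : ((1 / 2 : ℝ) : ℂ) = (1 / 2 : ℂ) := by push_cast; ring
    rw [h1, ← h2, ← Complex.ofReal_cpow (by positivity) (1 / 2 : ℝ)]
    norm_cast
    rw [← Real.sqrt_eq_rpow, Real.sqrt_div (by positivity : (0:ℝ) ≤ π), Real.sqrt_sq hβ.le]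
  rw [hcpow, ← mul_assoc]
  have h3 : ((β / Real.sqrt π : ℝ) : ℂ) * ((Real.sqrt π / β : ℝ) : ℂ) = 1 := by
    rw [← Complex.ofReal_mul]
    have h1 : Real.sqrt π ≠ 0 := by positivity
    have : β / Real.sqrt π * (Real.sqrt π / β) = 1 := by field_simp
    rw [this, Complex.ofReal_one]
  rw [h3, one_mul]
  have h4 : (-(ω:ℂ) ^ 2 / (4 * (β:ℂ) ^ 2)) = ((-(ω ^ 2 / (4 * β ^ 2)) : ℝ) : ℂ) := by
    push_cast; ring
  rw [h4, Complex.ofReal_exp]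

lemma interval_scalar (ω t : ℝ) :
    ∫ s in (0:ℝ)..t, (-Complex.I * ω * Complex.exp (Complex.I * ω * s)) =
      1 - Complex.exp (Complex.I * ω * t) := by
  rcases eq_or_ne ω 0 with hω | hω
  · simp [hω]
  · have hc : Complex.I * ω ≠ 0 :=
      mul_ne_zero Complex.I_ne_zero (Complex.ofReal_ne_zero.mpr hω)
    rw [intervalIntegral.integral_const_mul, integral_exp_mul_complex hc]
    rw [Complex.ofReal_zero, mul_zero, Complex.exp_zero]
    have hω' : (ω : ℂ) ≠ 0 := Complex.ofReal_ne_zero.mpr hω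
    field_simp
    ring
end Aux

set_option maxHeartbeats 1000000 in
set_option synthInstance.maxHeartbeats 200000 in
theorem stmt5 {V : Type*} [NormedAddCommGroup V] [InnerProductSpace ℂ V]
    [FiniteDimensional ℂ V]
    {ι : Type*} [Fintype ι] [DecidableEq ι] (E : ι → ℝ) (Pr : ι → (V →L[ℂ] V))
    (hPsa : ∀ μ, IsSelfAdjoint (Pr μ))
    (hPidem : ∀ μ, Pr μ * Pr μ = Pr μ)
    (hPorth : ∀ μ ν, μ ≠ ν → Pr μ * Pr ν = 0)
    (hPsum : ∑ μ, Pr μ = 1)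
    (H : V →L[ℂ] V) (hH : H = ∑ μ, (E μ : ℂ) • Pr μ)
    (S : Finset ι) (P : V →L[ℂ] V) (hP : P = ∑ μ ∈ S, Pr μ)
    (A : V →L[ℂ] V) (hA : A = P * A * (1 - P))
    (β : ℝ) (hβ : 0 < β) :
    aiL H β ((-Complex.I) • (H * A - A * H)) - A =
      -∑ μ ∈ S, ∑ ν ∈ Sᶜ,
        Real.exp (-((E μ - E ν) ^ 2 / (4 * β ^ 2))) • (Pr μ * A * Pr ν) := by
  haveI : CompleteSpace V := FiniteDimensional.complete ℂ V
  set B : ι → ι → (V →L[ℂ] V) := fun μ ν => Pr μ * A * Pr ν with hB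
  -- eigen-relations
  have hHP : ∀ ν, H * Pr ν = (E ν : ℂ) • Pr ν := by
    intro ν
    rw [hH, Finset.sum_mul]
    rw [Finset.sum_eq_single ν]
    · rw [smul_mul_assoc, hPidem]
    · intro μ _ hμν
      rw [smul_mul_assoc, hPorth μ ν hμν, smul_zero]
    · intro h; exact absurd (Finset.mem_univ ν) h
  have hPH : ∀ μ, Pr μ * H = (E μ : ℂ) • Pr μ := by
    intro μ
    rw [hH, Finset.mul_sum]
    rw [Finset.sum_eq_single μ]
    · rw [mul_smul_comm, hPidem]
    · intro ν _ hνμ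
      rw [mul_smul_comm, hPorth μ ν (Ne.symm hνμ), smul_zero]
    · intro h; exact absurd (Finset.mem_univ μ) h
  -- A as a double sum
  have hPc : (1 : V →L[ℂ] V) - P = ∑ ν ∈ Sᶜ, Pr ν := by
    rw [hP, sub_eq_iff_eq_add, ← hPsum, ← Finset.sum_add_sum_compl S Pr, add_comm]
  have hAB : A = ∑ μ ∈ S, ∑ ν ∈ Sᶜ, B μ ν := by
    conv_lhs => rw [hA, hPc, hP]
    rw [Finset.sum_mul, Finset.sum_mul]
    refine Finset.sum_congr rfl fun μ _ => ?_
    rw [Finset.mul_sum]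
  have hHB : ∀ μ ν, H * B μ ν = (E μ : ℂ) • B μ ν := by
    intro μ ν
    show H * (Pr μ * A * Pr ν) = (E μ : ℂ) • (Pr μ * A * Pr ν)
    rw [← mul_assoc, ← mul_assoc, hHP μ, smul_mul_assoc, smul_mul_assoc]
  have hBH : ∀ μ ν, B μ ν * H = (E ν : ℂ) • B μ ν := by
    intro μ ν
    show Pr μ * A * Pr ν * H = (E ν : ℂ) • (Pr μ * A * Pr ν)
    rw [mul_assoc, hPH ν, mul_smul_comm]
  -- the commutator as a double sum
  have hcomm : (-Complex.I) • (H * A - A * H) =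
      ∑ μ ∈ S, ∑ ν ∈ Sᶜ, ((-Complex.I * ((E μ - E ν : ℝ) : ℂ))) • B μ ν := by
    conv_lhs => rw [hAB]
    rw [Finset.mul_sum, Finset.sum_mul, ← Finset.sum_sub_distrib, Finset.smul_sum]
    refine Finset.sum_congr rfl fun μ _ => ?_
    rw [Finset.mul_sum, Finset.sum_mul, ← Finset.sum_sub_distrib, Finset.smul_sum]
    refine Finset.sum_congr rfl fun ν _ => ?_
    rw [hHB, hBH, ← sub_smul, smul_smul]
    congr 1
    push_cast
    ring
  -- Heisenberg evolution of each term
  have hheisB : ∀ (s : ℝ) (μ ν : ι), heis H s (B μ ν) =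
      Complex.exp (Complex.I * ((E μ - E ν : ℝ) : ℂ) * s) • B μ ν := by
    intro s μ ν
    unfold heis
    rw [exp_mul_eig (X := (Complex.I * (s : ℂ)) • H) (Q := B μ ν)
        (e := Complex.I * (s : ℂ) * (E μ : ℂ))
        (by rw [smul_mul_assoc, hHB μ ν, smul_smul]),
      smul_mul_assoc,
      eig_mul_exp (X := (-(Complex.I * (s : ℂ))) • H) (Q := B μ ν)
        (e := -(Complex.I * (s : ℂ)) * (E ν : ℂ))
        (by rw [mul_smul_comm, hBH μ ν, smul_smul]),
      smul_smul, ← Complex.exp_add]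
    congr 2
    push_cast
    ring
  -- Heisenberg evolution of the commutator
  have hheis : ∀ s : ℝ, heis H s ((-Complex.I) • (H * A - A * H)) =
      ∑ μ ∈ S, ∑ ν ∈ Sᶜ,
        (-Complex.I * ((E μ - E ν : ℝ) : ℂ) *
          Complex.exp (Complex.I * ((E μ - E ν : ℝ) : ℂ) * s)) • B μ ν := by
    intro s
    rw [hcomm]
    unfold heis
    rw [Finset.mul_sum, Finset.sum_mul]
    refine Finset.sum_congr rfl fun μ _ => ?_
    rw [Finset.mul_sum, Finset.sum_mul]
    refine Finset.sum_congr rfl fun ν _ => ?_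
    rw [mul_smul_comm, smul_mul_assoc]
    have := hheisB s μ ν
    unfold heis at this
    rw [this, smul_smul]
  -- inner interval integral
  have hinner : ∀ t : ℝ,
      (∫ s in (0:ℝ)..t, heis H s ((-Complex.I) • (H * A - A * H))) =
      ∑ μ ∈ S, ∑ ν ∈ Sᶜ,
        (1 - Complex.exp (Complex.I * ((E μ - E ν : ℝ) : ℂ) * t)) • B μ ν := by
    intro t
    simp_rw [hheis]
    rw [intervalIntegral.integral_finset_sum]
    · refine Finset.sum_congr rfl fun μ _ => ?_
      rw [intervalIntegral.integral_finset_sum]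
      · refine Finset.sum_congr rfl fun ν _ => ?_
        rw [intervalIntegral.integral_smul_const, interval_scalar (E μ - E ν) t]
      · intro ν _
        apply Continuous.intervalIntegrable
        fun_prop
    · intro μ _
      apply Continuous.intervalIntegrable
      fun_prop
  -- outer integral
  have hintegrand : ∀ μ ν : ι, Integrable (fun t : ℝ =>
      ((phi β t : ℂ) * (1 - Complex.exp (Complex.I * ((E μ - E ν : ℝ) : ℂ) * t)))) := by
    intro μ ν
    simp_rw [mul_sub, mul_one]
    exact ((phi_integrable hβ).ofReal).sub (phi_mul_cexp_integrable hβ (E μ - E ν))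
  have houter : aiL H β ((-Complex.I) • (H * A - A * H)) =
      ∑ μ ∈ S, ∑ ν ∈ Sᶜ,
        ((1 : ℂ) - ((Real.exp (-((E μ - E ν) ^ 2 / (4 * β ^ 2))) : ℝ) : ℂ)) • B μ ν := by
    unfold aiL
    simp_rw [hinner, Finset.smul_sum, real_smul_complex_smul]
    rw [integral_finset_sum]
    · refine Finset.sum_congr rfl fun μ _ => ?_
      rw [integral_finset_sum]
      · refine Finset.sum_congr rfl fun ν _ => ?_
        rw [integral_smul_const]
        congr 1
        simp_rw [mul_sub, mul_one]
        have hphiC : Integrable (fun t : ℝ => ((phi β t : ℝ) : ℂ)) :=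
          (phi_integrable hβ).ofReal
        have h5 : (∫ t : ℝ, ((phi β t : ℝ) : ℂ)) = ((1 : ℝ) : ℂ) := by
          rw [← phi_integral_one hβ]
          exact integral_ofReal
        rw [integral_sub hphiC (phi_mul_cexp_integrable hβ (E μ - E ν)), h5,
          phi_fourier hβ (E μ - E ν), Complex.ofReal_one]
      · intro ν _
        exact (hintegrand μ ν).smul_const _
    · intro μ _
      apply integrable_finset_sum
      intro ν _
      exact (hintegrand μ ν).smul_const _
  rw [houter]
  conv_lhs => rw [hAB]
  rw [← Finset.sum_sub_distrib, ← Finset.sum_neg_distrib]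
  refine Finset.sum_congr rfl fun μ _ => ?_
  rw [← Finset.sum_sub_distrib, ← Finset.sum_neg_distrib]
  refine Finset.sum_congr rfl fun ν _ => ?_
  rw [sub_smul, one_smul, coe_real_smul]
  simp only [hB]
  abel
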